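/- Let V be a vector space with two decreasing/increasing filtrations F^• and G^•, and define their convolution (F∗G)^n V := Σ_{j+k=n} F^j V ∩ G^k V. Then for each n there is a natural isomorphism Gr^n_{F∗G} V ≅ ⊕_{j+k=n} Gr^j_F Gr^k_G V, provided V is a finite-dimensional vector space over a field and the filtrations are exhaustive and separated. -/

import Mathlib

open DirectSum

section

variable {K V : Type*} [Field K] [AddCommGroup V] [Module K V]

/-- For submodules `p q` of `V`, the "graded piece" `p / (p ∩ q)`, i.e. the image of
`p` in `V/q`. -/
abbrev GrPair (p q : Submodule K V) : Type _ := p ⧸ (q.comap p.subtype)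

/-- The convolution `(F∗G)^n V = Σ_{j+k=n} F^j V ∩ G^k V` of two filtrations. -/
def convFil (F G : ℤ → Submodule K V) (n : ℤ) : Submodule K V :=
  ⨆ j : ℤ, F j ⊓ G (n - j)

/-- A direct sum of modules, all but finitely many of which are trivial, is isomorphic to
the product over the finite index set. -/
theorem aux_dsum_equiv {K : Type*} [Field K] {ι : Type*} [DecidableEq ι] (M : ι → Type*)
    [∀ i, AddCommGroup (M i)] [∀ i, Module K (M i)] (s : Finset ι)
    (hs : ∀ i ∉ s, Subsingleton (M i)) :
    Nonempty ((⨁ i, M i) ≃ₗ[K] ∀ i : s, M i) := by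
  refine ⟨LinearEquiv.ofLinear (LinearMap.pi fun i : s => DirectSum.component K ι M i)
    (∑ i ∈ s.attach, (DirectSum.lof K ι M i).comp (LinearMap.proj i)) ?_ ?_⟩
  · apply LinearMap.ext; intro v
    funext i
    simp only [LinearMap.comp_apply, LinearMap.pi_apply, LinearMap.sum_apply, map_sum,
      LinearMap.id_apply, LinearMap.proj_apply, DirectSum.component.of]
    rw [Finset.sum_eq_single i]
    · simp
    · intro j _ hji
      exact dif_neg (fun h => hji (Subtype.ext h) : (j:ι) = i → False)
    · simp
  · apply LinearMap.ext; intro x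
    refine DirectSum.ext_component K fun i => ?_
    simp only [LinearMap.comp_apply, LinearMap.sum_apply, map_sum, LinearMap.id_apply,
      LinearMap.proj_apply, LinearMap.pi_apply, DirectSum.component.of]
    by_cases hi : i ∈ s
    · rw [Finset.sum_eq_single (⟨i, hi⟩ : s)]
      · simp
      · intro j _ hji
        exact dif_neg (fun h => hji (Subtype.ext h) : (j:ι) = i → False)
      · simp
    · have := hs i hi
      apply Subsingleton.elim

theorem finrank_grPair [FiniteDimensional K V] (p q : Submodule K V) :
    (Module.finrank K (GrPair p q) : ℤ)
      = Module.finrank K p - Module.finrank K ↥(p ⊓ q) := by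
  have h1 : Submodule.comap p.subtype q = Submodule.comap p.subtype (p ⊓ q) := by
    ext x; simp [x.2]
  have h2 : Module.finrank K ↥(Submodule.comap p.subtype q)
      = Module.finrank K ↥(p ⊓ q) := by
    rw [h1]
    exact (Submodule.comapSubtypeEquivOfLe (inf_le_left : p ⊓ q ≤ p)).finrank_eq
  have h3 := Submodule.finrank_quotient_add_finrank (Submodule.comap p.subtype q)
  rw [h2] at h3
  have h4 : Module.finrank K (GrPair p q)
      = Module.finrank K (↥p ⧸ Submodule.comap p.subtype q) := rfl
  rw [h4]
  omega

theorem subsingleton_grPair (p q : Submodule K V) (h : p ≤ q) :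
    Subsingleton (GrPair p q) := by
  rw [Submodule.Quotient.subsingleton_iff, Submodule.comap_subtype_eq_top]
  exact h

theorem icc_insert (a b : ℤ) (h : a ≤ b + 1) :
    Finset.Icc a (b+1) = insert (b+1) (Finset.Icc a b) := by
  ext x; simp; omega

theorem finrank_partial_sup [FiniteDimensional K V]
    (F G : ℤ → Submodule K V) (hF : Antitone F) (hG : Antitone G)
    (d lo : ℤ) (hlo : G (d - lo + 1) = ⊥) :
    ∀ m : ℤ, lo ≤ m →
      (Module.finrank K ↥((Finset.Icc lo m).sup (fun j => F j ⊓ G (d - j))) : ℤ)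
        = ∑ j ∈ Finset.Icc lo m,
            ((Module.finrank K ↥(F j ⊓ G (d - j)) : ℤ)
              - (Module.finrank K ↥(F j ⊓ G (d - j + 1)) : ℤ)) := by
  intro m' hm'
  obtain ⟨k, rfl⟩ : ∃ k : ℕ, m' = lo + k := ⟨(m' - lo).toNat, by omega⟩
  clear hm'
  induction k with
  | zero =>
      have hbot : F lo ⊓ G (d - lo + 1) = ⊥ := by rw [hlo, inf_bot_eq]
      have h0 : lo + ((0:ℕ):ℤ) = lo := by norm_num
      rw [h0, Finset.Icc_self, Finset.sup_singleton, Finset.sum_singleton, hbot]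
      simp [finrank_bot]
  | succ k ih =>
      set m : ℤ := lo + k with hmdef
      have hm : lo ≤ m := by omega
      have hcast : lo + ((k : ℕ) + 1 : ℕ) = m + 1 := by push_cast; omega
      rw [hcast]
      have hins := icc_insert lo m (by omega)
      have hnot : (m+1) ∉ Finset.Icc lo m := by simp
      rw [hins, Finset.sup_insert, Finset.sum_insert hnot, ← ih]
      have hSle : (Finset.Icc lo m).sup (fun j => F j ⊓ G (d - j)) ≤ G (d - m) := by
        apply Finset.sup_le
        intro j hj
        simp only [Finset.mem_Icc] at hj
        exact inf_le_right.trans (hG (by omega))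
      have hmem : m ∈ Finset.Icc lo m := Finset.mem_Icc.mpr ⟨hm, le_refl m⟩
      have hint : (F (m+1) ⊓ G (d - (m+1)))
            ⊓ (Finset.Icc lo m).sup (fun j => F j ⊓ G (d - j))
          = F (m+1) ⊓ G (d - m) := by
        apply le_antisymm
        · exact le_inf (inf_le_left.trans inf_le_left) (inf_le_right.trans hSle)
        · refine le_inf (le_inf inf_le_left ((inf_le_right).trans (hG (by omega)))) ?_
          refine le_trans ?_
            (Finset.le_sup (f := fun j => F j ⊓ G (d - j)) hmem)
          exact inf_le_inf (hF (by omega)) le_rfl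
      have hmod := Submodule.finrank_sup_add_finrank_inf_eq
        (F (m+1) ⊓ G (d - (m+1))) ((Finset.Icc lo m).sup (fun j => F j ⊓ G (d - j)))
      rw [hint] at hmod
      have e2 : d - (m+1) + 1 = d - m := by ring
      rw [e2]
      omega

theorem finrank_convFil [FiniteDimensional K V]
    (F G : ℤ → Submodule K V) (hF : Antitone F) (hG : Antitone G)
    (d lo hi : ℤ) (hlo : G (d - lo + 1) = ⊥) (hhi : ∀ j, hi < j → F j = ⊥)
    (hlohi : lo ≤ hi) :
    (Module.finrank K (convFil F G d) : ℤ)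
      = ∑ j ∈ Finset.Icc lo hi,
          ((Module.finrank K ↥(F j ⊓ G (d - j)) : ℤ)
            - (Module.finrank K ↥(F j ⊓ G (d - j + 1)) : ℤ)) := by
  have hfull : convFil F G d = (Finset.Icc lo hi).sup (fun j => F j ⊓ G (d - j)) := by
    apply le_antisymm
    · apply iSup_le
      intro j
      by_cases hj : lo ≤ j ∧ j ≤ hi
      · exact Finset.le_sup (f := fun j => F j ⊓ G (d - j)) (Finset.mem_Icc.mpr hj)
      · have hbot : F j ⊓ G (d - j) = ⊥ := by
          rcases not_and_or.mp hj with h | h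
          · have hG' : G (d - j) = ⊥ := by
              have := hG (show d - lo + 1 ≤ d - j by omega)
              rw [hlo] at this; exact le_bot_iff.mp this
            simp only [hG', inf_bot_eq]
          · simp only [hhi j (by omega), bot_inf_eq]
        rw [hbot]; exact bot_le
    · apply Finset.sup_le
      intro j _
      exact le_iSup (fun j => F j ⊓ G (d - j)) j
  rw [hfull]
  exact finrank_partial_sup F G hF hG d lo hlo hi hlohi

/-- **Graded pieces of the convolution of two filtrations.** -/
theorem convolution_graded_iso [FiniteDimensional K V]
    (F G : ℤ → Submodule K V) (hF : Antitone F) (hG : Antitone G)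
    (hFtop : ∃ a : ℤ, F a = ⊤) (hFbot : ∃ a : ℤ, F a = ⊥)
    (hGtop : ∃ a : ℤ, G a = ⊤) (hGbot : ∃ a : ℤ, G a = ⊥) (n : ℤ) :
    Nonempty (
      (GrPair (convFil F G n) (convFil F G (n + 1)))
      ≃ₗ[K]
      (⨁ j : ℤ, GrPair (F j ⊓ G (n - j))
        ((F (j + 1) ⊓ G (n - j)) ⊔ (F j ⊓ G (n - j + 1))))) := by
  obtain ⟨bF, hbF⟩ := hFbot
  obtain ⟨bG, hbG⟩ := hGbot
  have hFb : ∀ j, bF ≤ j → F j = ⊥ := fun j hj => le_bot_iff.mp (hbF ▸ hF hj)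
  have hGb : ∀ k, bG ≤ k → G k = ⊥ := fun k hk => le_bot_iff.mp (hbG ▸ hG hk)
  set lo : ℤ := n - bG + 1 with hlo_def
  set hi : ℤ := max bF lo with hhi_def
  have hlohi : lo ≤ hi := le_max_right _ _
  -- dimensions of the convolution in degrees n and n+1
  have hcn := finrank_convFil F G hF hG n lo hi
    (by rw [show n - lo + 1 = bG by omega]; exact hbG)
    (fun j hj => hFb j (by omega)) hlohi
  have hcn1 := finrank_convFil F G hF hG (n+1) lo hi
    (hGb _ (by omega)) (fun j hj => hFb j (by omega)) hlohi
  -- the convolution is a decreasing filtration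
  have hle : convFil F G (n + 1) ≤ convFil F G n := by
    apply iSup_le
    intro j
    exact le_iSup_of_le j (inf_le_inf le_rfl (hG (by omega)))
  -- dimension of the left-hand side
  have hLHS : (Module.finrank K (GrPair (convFil F G n) (convFil F G (n + 1))) : ℤ)
      = (Module.finrank K (convFil F G n) : ℤ)
        - Module.finrank K (convFil F G (n+1)) := by
    rw [finrank_grPair, inf_eq_right.mpr hle]
  -- the summands vanish off `Finset.Icc lo hi`
  have hsub : ∀ j ∉ Finset.Icc lo hi,
      Subsingleton (GrPair (F j ⊓ G (n - j))
        ((F (j + 1) ⊓ G (n - j)) ⊔ (F j ⊓ G (n - j + 1)))) := by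
    intro j hj
    simp only [Finset.mem_Icc, not_and_or, not_le] at hj
    apply subsingleton_grPair
    have hbot : F j ⊓ G (n - j) = ⊥ := by
      rcases hj with h | h
      · rw [hGb (n - j) (by omega), inf_bot_eq]
      · rw [hFb j (by omega), bot_inf_eq]
    rw [hbot]
    exact bot_le
  obtain ⟨eqv⟩ := aux_dsum_equiv (K := K)
    (fun j => GrPair (F j ⊓ G (n - j)) ((F (j + 1) ⊓ G (n - j)) ⊔ (F j ⊓ G (n - j + 1))))
    (Finset.Icc lo hi) hsub
  haveI : Module.Finite K (⨁ j : ℤ, GrPair (F j ⊓ G (n - j))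
      ((F (j + 1) ⊓ G (n - j)) ⊔ (F j ⊓ G (n - j + 1)))) :=
    Module.Finite.equiv eqv.symm
  -- dimension of the right-hand side
  have hRHS : Module.finrank K (⨁ j : ℤ, GrPair (F j ⊓ G (n - j))
        ((F (j + 1) ⊓ G (n - j)) ⊔ (F j ⊓ G (n - j + 1))))
      = ∑ j ∈ Finset.Icc lo hi, Module.finrank K (GrPair (F j ⊓ G (n - j))
          ((F (j + 1) ⊓ G (n - j)) ⊔ (F j ⊓ G (n - j + 1)))) := by
    rw [eqv.finrank_eq, Module.finrank_pi_fintype]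
    exact Finset.sum_coe_sort (Finset.Icc lo hi)
      (fun j => Module.finrank K (GrPair (F j ⊓ G (n - j))
        ((F (j + 1) ⊓ G (n - j)) ⊔ (F j ⊓ G (n - j + 1)))))
  -- per-term dimension formula
  have hterm : ∀ j : ℤ, (Module.finrank K (GrPair (F j ⊓ G (n - j))
        ((F (j + 1) ⊓ G (n - j)) ⊔ (F j ⊓ G (n - j + 1)))) : ℤ)
      = (Module.finrank K ↥(F j ⊓ G (n - j)) : ℤ)
        - (Module.finrank K ↥(F (j+1) ⊓ G (n + 1 - (j+1))) : ℤ)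
        - (Module.finrank K ↥(F j ⊓ G (n + 1 - j)) : ℤ)
        + (Module.finrank K ↥(F (j+1) ⊓ G (n + 2 - (j+1))) : ℤ) := by
    intro j
    have hBle : (F (j + 1) ⊓ G (n - j)) ⊔ (F j ⊓ G (n - j + 1)) ≤ F j ⊓ G (n - j) :=
      sup_le (inf_le_inf (hF (by omega)) le_rfl) (inf_le_inf le_rfl (hG (by omega)))
    have hXY : (F (j + 1) ⊓ G (n - j)) ⊓ (F j ⊓ G (n - j + 1))
        = F (j+1) ⊓ G (n - j + 1) := by
      apply le_antisymm
      · exact le_inf (inf_le_left.trans inf_le_left) (inf_le_right.trans inf_le_right)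
      · exact le_inf (le_inf inf_le_left (inf_le_right.trans (hG (by omega))))
          (le_inf (inf_le_left.trans (hF (by omega))) inf_le_right)
    have hmod := Submodule.finrank_sup_add_finrank_inf_eq
      (F (j + 1) ⊓ G (n - j)) (F j ⊓ G (n - j + 1))
    rw [hXY] at hmod
    rw [finrank_grPair, inf_eq_right.mpr hBle]
    rw [show n + 1 - (j+1) = n - j by ring, show n + 1 - j = n - j + 1 by ring,
      show n + 2 - (j+1) = n - j + 1 by ring]
    omega
  -- rewrite the sums for degrees n and n+1 in a common normal form
  have hcn' : (Module.finrank K (convFil F G n) : ℤ)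
      = ∑ j ∈ Finset.Icc lo hi,
          ((Module.finrank K ↥(F j ⊓ G (n - j)) : ℤ)
            - (Module.finrank K ↥(F j ⊓ G (n + 1 - j)) : ℤ)) := by
    rw [hcn]
    refine Finset.sum_congr rfl fun j _ => by rw [show n - j + 1 = n + 1 - j by ring]
  have hcn1' : (Module.finrank K (convFil F G (n+1)) : ℤ)
      = ∑ j ∈ Finset.Icc lo hi,
          ((Module.finrank K ↥(F j ⊓ G (n + 1 - j)) : ℤ)
            - (Module.finrank K ↥(F j ⊓ G (n + 2 - j)) : ℤ)) := by
    rw [hcn1]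
    refine Finset.sum_congr rfl fun j _ => by rw [show n + 1 - j + 1 = n + 2 - j by ring]
  -- the telescoping shift
  have hzero_hi : ∀ j : ℤ, hi < j →
      (Module.finrank K ↥(F j ⊓ G (n + 2 - j)) : ℤ)
        - (Module.finrank K ↥(F j ⊓ G (n + 1 - j)) : ℤ) = 0 := by
    intro j hj
    rw [hFb j (by omega), bot_inf_eq, bot_inf_eq, finrank_bot]
    ring
  have hzero_lo : ∀ j : ℤ, j ≤ lo →
      (Module.finrank K ↥(F j ⊓ G (n + 2 - j)) : ℤ)
        - (Module.finrank K ↥(F j ⊓ G (n + 1 - j)) : ℤ) = 0 := by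
    intro j hj
    rw [hGb (n + 2 - j) (by omega), hGb (n + 1 - j) (by omega), inf_bot_eq, finrank_bot]
    ring
  have hshift : ∑ j ∈ Finset.Icc lo hi,
        ((Module.finrank K ↥(F j ⊓ G (n + 2 - j)) : ℤ)
          - (Module.finrank K ↥(F j ⊓ G (n + 1 - j)) : ℤ))
      = ∑ j ∈ Finset.Icc lo hi,
        ((Module.finrank K ↥(F (j+1) ⊓ G (n + 2 - (j+1))) : ℤ)
          - (Module.finrank K ↥(F (j+1) ⊓ G (n + 1 - (j+1))) : ℤ)) := by
    set g : ℤ → ℤ := fun j => (Module.finrank K ↥(F j ⊓ G (n + 2 - j)) : ℤ)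
      - (Module.finrank K ↥(F j ⊓ G (n + 1 - j)) : ℤ) with hg
    show ∑ j ∈ Finset.Icc lo hi, g j = ∑ j ∈ Finset.Icc lo hi, g (j+1)
    have h1 : ∑ j ∈ Finset.Icc lo hi, g (j+1)
        = ∑ j ∈ Finset.Icc (lo+1) (hi+1), g j := by
      rw [← Finset.map_add_right_Icc lo hi 1, Finset.sum_map]
      rfl
    have h2 : ∑ j ∈ Finset.Icc lo hi, g j = ∑ j ∈ Finset.Icc lo (hi+1), g j := by
      apply Finset.sum_subset
      · intro x hx
        simp only [Finset.mem_Icc] at *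
        omega
      · intro x hx hnx
        simp only [Finset.mem_Icc] at hx hnx
        exact hzero_hi x (by omega)
    have h3 : ∑ j ∈ Finset.Icc (lo+1) (hi+1), g j
        = ∑ j ∈ Finset.Icc lo (hi+1), g j := by
      apply Finset.sum_subset
      · intro x hx
        simp only [Finset.mem_Icc] at *
        omega
      · intro x hx hnx
        simp only [Finset.mem_Icc] at hx hnx
        exact hzero_lo x (by omega)
    rw [h1, h3, h2]
  -- put everything together
  rw [FiniteDimensional.nonempty_linearEquiv_iff_finrank_eq]
  have key : (Module.finrank K (GrPair (convFil F G n) (convFil F G (n + 1))) : ℤ)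
      = (Module.finrank K (⨁ j : ℤ, GrPair (F j ⊓ G (n - j))
          ((F (j + 1) ⊓ G (n - j)) ⊔ (F j ⊓ G (n - j + 1)))) : ℤ) := by
    rw [hLHS, hcn', hcn1', hRHS]
    push_cast
    rw [Finset.sum_congr rfl fun j _ => hterm j]
    simp only [Finset.sum_sub_distrib, Finset.sum_add_distrib] at hshift ⊢
    linarith [hshift]
  exact_mod_cast key

end
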